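/- Let γ, A, τ > 0 and g > 1. Set w₀ = A(e^{γAτ} − 1/g)/(e^{γAτ} − 1) and define w(t) = A e^{γAt} g w₀ / (A + (e^{γAt} − 1) g w₀) for t ∈ (0, τ]. Then w₀ > 0, the denominator A + (e^{γAt} − 1) g w₀ is positive for every t ∈ [0, τ], w is differentiable on (0, τ) with w'(t) = γ w(t)(A − w(t)) for all t ∈ (0, τ), the right-limit of w at 0 equals g w₀, and w(τ) = w₀. -/

import Mathlib

theorem stmt_0 (γ A τ g w₀ : ℝ) (w : ℝ → ℝ)
    (hγ : 0 < γ) (hA : 0 < A) (hτ : 0 < τ) (hg : 1 < g)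
    (hw₀ : w₀ = A * (Real.exp (γ * A * τ) - 1 / g) / (Real.exp (γ * A * τ) - 1))
    (hw : ∀ t, w t = A * Real.exp (γ * A * t) * g * w₀ /
      (A + (Real.exp (γ * A * t) - 1) * g * w₀)) :
    0 < w₀ ∧
    (∀ t ∈ Set.Icc (0:ℝ) τ, 0 < A + (Real.exp (γ * A * t) - 1) * g * w₀) ∧
    (∀ t ∈ Set.Ioo (0:ℝ) τ, HasDerivAt w (γ * w t * (A - w t)) t) ∧
    Filter.Tendsto w (nhdsWithin (0:ℝ) (Set.Ioi 0)) (nhds (g * w₀)) ∧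
    w τ = w₀ := by
  have hg0 : (0:ℝ) < g := lt_trans one_pos hg
  have hE1 : 1 < Real.exp (γ * A * τ) := Real.one_lt_exp_iff.mpr (by positivity)
  have hE1' : (0:ℝ) < Real.exp (γ * A * τ) - 1 := by linarith
  have hinvg : 1 / g < 1 := by
    rw [div_lt_one hg0]; exact hg
  have hw₀pos : 0 < w₀ := by
    rw [hw₀]
    apply div_pos _ hE1'
    have : 1 / g < Real.exp (γ * A * τ) := lt_trans hinvg hE1
    nlinarith
  have hden : ∀ t, 0 ≤ t → 0 < A + (Real.exp (γ * A * t) - 1) * g * w₀ := by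
    intro t ht
    have h1 : 1 ≤ Real.exp (γ * A * t) := Real.one_le_exp (by positivity)
    have h2 : 0 ≤ (Real.exp (γ * A * t) - 1) * g * w₀ :=
      mul_nonneg (mul_nonneg (by linarith) hg0.le) hw₀pos.le
    linarith
  have hwf : w = fun t => A * Real.exp (γ * A * t) * g * w₀ /
      (A + (Real.exp (γ * A * t) - 1) * g * w₀) := funext hw
  refine ⟨hw₀pos, fun t ht => hden t ht.1, ?_, ?_, ?_⟩
  · intro t ht
    have hD := hden t (le_of_lt ht.1)
    have hDne : A + (Real.exp (γ * A * t) - 1) * g * w₀ ≠ 0 := ne_of_gt hD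
    have h0 : HasDerivAt (fun t : ℝ => γ * A * t) (γ * A) t := by
      simpa using (hasDerivAt_id t).const_mul (γ * A)
    have he : HasDerivAt (fun t => Real.exp (γ * A * t)) (γ * A * Real.exp (γ * A * t)) t := by
      simpa [mul_comm] using h0.exp
    have hnum : HasDerivAt (fun t => A * Real.exp (γ * A * t) * g * w₀)
        (A * (γ * A * Real.exp (γ * A * t)) * g * w₀) t :=
      ((he.const_mul A).mul_const g).mul_const w₀
    have hdn : HasDerivAt (fun t => A + (Real.exp (γ * A * t) - 1) * g * w₀)
        (γ * A * Real.exp (γ * A * t) * g * w₀) t :=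
      (((he.sub_const 1).mul_const g).mul_const w₀).const_add A
    have hder := hnum.div hdn hDne
    rw [hwf]
    refine hder.congr_deriv ?_
    have key : ∀ D : ℝ, D ≠ 0 → ∀ E : ℝ, (A * (γ * A * E) * g * w₀ * D - A * E * g * w₀ * (γ * A * E * g * w₀)) / D ^ 2
        = γ * (A * E * g * w₀ / D) * (A - A * E * g * w₀ / D) := by
      intro D hD0 E
      field_simp
    exact key _ hDne _
  · rw [hwf]
    have hcont : ContinuousAt (fun t => A * Real.exp (γ * A * t) * g * w₀ /
        (A + (Real.exp (γ * A * t) - 1) * g * w₀)) 0 := by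
      apply ContinuousAt.div
      · fun_prop
      · fun_prop
      · simpa using hA.ne'
    have htend := hcont.continuousWithinAt (s := Set.Ioi 0)
    have hval : A * Real.exp (γ * A * 0) * g * w₀ /
        (A + (Real.exp (γ * A * 0) - 1) * g * w₀) = g * w₀ := by
      rw [mul_zero, Real.exp_zero]
      field_simp
      ring
    rw [show (g * w₀) = A * Real.exp (γ * A * 0) * g * w₀ /
        (A + (Real.exp (γ * A * 0) - 1) * g * w₀) from hval.symm]
    exact htend
  · have hE1ne : Real.exp (γ * A * τ) - 1 ≠ 0 := ne_of_gt hE1'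
    have hgne : g ≠ 0 := ne_of_gt hg0
    rw [hw τ, div_eq_iff (ne_of_gt (hden τ hτ.le)), hw₀]
    have h1 : A * (Real.exp (γ * A * τ) - 1 / g) / (Real.exp (γ * A * τ) - 1) * (Real.exp (γ * A * τ) - 1)
        = A * (Real.exp (γ * A * τ) - 1 / g) := div_mul_cancel₀ _ hE1ne
    have h2 : g * (1 / g) = 1 := mul_one_div_cancel hgne
    linear_combination (A * (A * (Real.exp (γ * A * τ) - 1 / g) / (Real.exp (γ * A * τ) - 1))) * h2
      - (g * (A * (Real.exp (γ * A * τ) - 1 / g) / (Real.exp (γ * A * τ) - 1))) * h1
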